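/- If g is strictly monotone on the interval E, α ∉ {0, −1, −2, …, −(K−1)}, and 1 − y·g(t) > 0 on E, then for any pairwise distinct points t_0,…,t_K in E the determinant of the matrix with entries ∂_y^l G(t_i,y), where G(t,y) = (1 − y g(t))^{−α}, is nonzero. -/

import Mathlib

lemma stmt_3_aux (α c : ℝ) (l : ℕ) :
    ∀ z : ℝ, 0 < 1 - z * c →
      iteratedDeriv l (fun z => (1 - z * c) ^ (-α)) z
        = (∏ j ∈ Finset.range l, (α + j)) * c ^ l * (1 - z * c) ^ (-α - l) := by
  induction l with
  | zero => intro z hz; simp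
  | succ l ih =>
    intro z hz
    rw [iteratedDeriv_succ]
    have hopen : IsOpen {w : ℝ | 0 < 1 - w * c} :=
      isOpen_lt continuous_const (by continuity)
    have heq : (iteratedDeriv l (fun z => (1 - z * c) ^ (-α)))
        =ᶠ[nhds z] fun w => (∏ j ∈ Finset.range l, (α + j)) * c ^ l
          * (1 - w * c) ^ (-α - l) := by
      filter_upwards [hopen.mem_nhds hz] with w hw
      exact ih w hw
    rw [heq.deriv_eq]
    have h1 : HasDerivAt (fun w : ℝ => 1 - w * c) (-c) z := by
      simpa using ((hasDerivAt_id z).mul_const c).const_sub 1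
    have h2 : HasDerivAt (fun w : ℝ => (1 - w * c) ^ (-α - l))
        (-c * (-α - l) * (1 - z * c) ^ (-α - l - 1)) z :=
      h1.rpow_const (Or.inl (ne_of_gt hz))
    have h3 := (h2.const_mul ((∏ j ∈ Finset.range l, (α + j)) * c ^ l)).deriv
    rw [h3, Finset.prod_range_succ]
    have hexp : -α - ((l : ℝ) + 1) = -α - l - 1 := by ring
    push_cast
    rw [hexp]
    ring

theorem stmt_3 (E : Set ℝ) (hE : IsOpen E) (hEconn : E.OrdConnected)
    (g : ℝ → ℝ) (hg : AnalyticOn ℝ g E)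
    (hmono : StrictMonoOn g E ∨ StrictAntiOn g E)
    (α : ℝ) (K : ℕ) (hα : ∀ i < K, α + (i : ℝ) ≠ 0)
    (y : ℝ) (hy : ∀ t ∈ E, 0 < 1 - y * g t)
    (t : Fin (K+1) → ℝ) (ht : ∀ i, t i ∈ E) (htinj : Function.Injective t) :
    Matrix.det (Matrix.of fun l i : Fin (K+1) =>
        iteratedDeriv (l : ℕ) (fun z => (1 - z * g (t i)) ^ (-α)) y) ≠ 0 := by
  set c : Fin (K+1) → ℝ := fun i => g (t i) with hc
  set b : Fin (K+1) → ℝ := fun i => 1 - y * c i with hb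
  have hbpos : ∀ i, 0 < b i := fun i => hy (t i) (ht i)
  have hcinj : Function.Injective c := by
    intro i j h
    rcases hmono with hm | hm
    · exact htinj (hm.injOn (ht i) (ht j) h)
    · exact htinj (hm.injOn (ht i) (ht j) h)
  set u : Fin (K+1) → ℝ := fun i => c i / b i with hu
  have huinj : Function.Injective u := by
    intro i j h
    apply hcinj
    rw [hu] at h
    rw [div_eq_div_iff (hbpos i).ne' (hbpos j).ne'] at h
    simp only [hb] at h
    linear_combination h
  set r : Fin (K+1) → ℝ := fun l => ∏ j ∈ Finset.range (l : ℕ), (α + j) with hr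
  set s : Fin (K+1) → ℝ := fun i => b i ^ (-α) with hs
  have key : (Matrix.of fun l i : Fin (K+1) =>
        iteratedDeriv (l : ℕ) (fun z => (1 - z * g (t i)) ^ (-α)) y)
      = Matrix.of fun l i : Fin (K+1) => r l * (s i * Matrix.transpose (Matrix.vandermonde u) l i) := by
    ext l i
    have := stmt_3_aux α (c i) (l : ℕ) y (hbpos i)
    simp only [Matrix.of_apply, Matrix.transpose_apply, Matrix.vandermonde]
    rw [show (fun z : ℝ => (1 - z * g (t i)) ^ (-α)) = fun z => (1 - z * c i) ^ (-α) from rfl,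
      this]
    have hbi := hbpos i
    rw [show -α - ((l : ℕ) : ℝ) = -α - ((l : ℕ) : ℝ) from rfl,
      Real.rpow_sub hbi, Real.rpow_natCast]
    simp only [hu, hs, hb, div_pow]
    field_simp
    ring
  rw [key]
  erw [Matrix.det_mul_column r]
  erw [Matrix.det_mul_row s]
  rw [Matrix.det_transpose]
  apply mul_ne_zero
  · apply Finset.prod_ne_zero_iff.mpr
    intro l _
    apply Finset.prod_ne_zero_iff.mpr
    intro j hj
    exact hα j (lt_of_lt_of_le (Finset.mem_range.mp hj) (Nat.lt_succ_iff.mp l.isLt))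
  · apply mul_ne_zero
    · exact Finset.prod_ne_zero_iff.mpr fun i _ => (Real.rpow_pos_of_pos (hbpos i) _).ne'
    · exact Matrix.det_vandermonde_ne_zero_iff.mpr huinj
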